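/- A function φ: ℝᵏ → ℝ is called α-controlled if there exist C, c > 0 with |φ(x)| ≤ exp(C∑_{i=1}^k |x_i|^α + c) for all x. If φ: ℝᵏ → ℝ is α-controlled with 1 ≤ α < 2, then there exists C > 0 such that for all μ ∈ ℝᵏ and all positive semidefinite Σ, E_{z∼N(μ,Σ)}|φ(z)| ≤ C·exp(C‖μ‖₂^α)·𝖢_α^k(C·α·‖Σ‖₂^{α/2}), where 𝖢_α^k(c) = E_{w∼N(0,I_k)}[exp(c‖w‖₂^α)] < ∞. -/

import Mathlib

open MeasureTheory ProbabilityTheory Matrix ENNReal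

/-- A measure `ν` on `d → ℝ` is the multivariate Gaussian with mean `m` and covariance `K`
iff every linear functional pushes it forward to the corresponding real Gaussian. -/
def IsGaussianVec {d : Type*} [Fintype d] [MeasurableSpace (d → ℝ)]
    (m : d → ℝ) (K : Matrix d d ℝ) (ν : Measure (d → ℝ)) : Prop :=
  ∀ l : d → ℝ, Measure.map (fun x => ∑ i, l i * x i) ν
    = gaussianReal (∑ i, l i * m i) (Real.toNNReal (l ⬝ᵥ K.mulVec l))

/-- The standard Gaussian measure on `Fin k → ℝ`. -/
noncomputable def stdGaussian (k : ℕ) : Measure (Fin k → ℝ) :=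
  Measure.pi fun _ : Fin k => gaussianReal 0 1

/-- Euclidean norm on `Fin k → ℝ`. -/
noncomputable def euclNorm {k : ℕ} (x : Fin k → ℝ) : ℝ :=
  Real.sqrt (∑ i, (x i) ^ 2)

/-- Spectral (ℓ² operator) norm of a matrix. -/
noncomputable def matSpectralNorm {k : ℕ} (S : Matrix (Fin k) (Fin k) ℝ) : ℝ :=
  sSup {r : ℝ | ∃ x : Fin k → ℝ, euclNorm x = 1 ∧ r = euclNorm (S.mulVec x)}

/-- `𝖢_α^k(c) := E_{w ∼ N(0, I_k)} exp (c ‖w‖₂^α)`, as a Lebesgue integral. -/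
noncomputable def gaussMGF (k : ℕ) (α c : ℝ) : ENNReal :=
  ∫⁻ w, ENNReal.ofReal (Real.exp (c * euclNorm w ^ α)) ∂(stdGaussian k)

/-- `φ : ℝᵏ → ℝ` is `α`-controlled if `|φ(x)| ≤ exp (C ∑ᵢ |xᵢ|^α + c)` for some `C, c > 0`. -/
def AlphaControlled {k : ℕ} (α : ℝ) (φ : (Fin k → ℝ) → ℝ) : Prop :=
  ∃ C c : ℝ, 0 < C ∧ 0 < c ∧
    ∀ x : Fin k → ℝ, |φ x| ≤ Real.exp (C * ∑ i, |x i| ^ α + c)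

/-! ### Auxiliary lemmas -/

instance AG_instProb (k : ℕ) : IsProbabilityMeasure (stdGaussian k) := by
  unfold _root_.stdGaussian; infer_instance

lemma AG_euclNorm_nonneg {k : ℕ} (x : Fin k → ℝ) : 0 ≤ euclNorm x := Real.sqrt_nonneg _

lemma AG_abs_le_euclNorm {k : ℕ} (x : Fin k → ℝ) (i : Fin k) : |x i| ≤ euclNorm x := by
  rw [← Real.sqrt_sq_eq_abs]
  exact Real.sqrt_le_sqrt (Finset.single_le_sum (fun j _ => sq_nonneg (x j)) (Finset.mem_univ i))

lemma AG_rpow_add_le {α : ℝ} (hα : 0 ≤ α) {s t : ℝ} (hs : 0 ≤ s) (ht : 0 ≤ t) :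
    (s + t) ^ α ≤ 2 ^ α * (s ^ α + t ^ α) := by
  have hm : s + t ≤ 2 * max s t := by rcases max_cases s t with ⟨h, h'⟩ | ⟨h, h'⟩ <;> nlinarith
  have h1 : (s + t) ^ α ≤ (2 * max s t) ^ α :=
    Real.rpow_le_rpow (by positivity) hm hα
  have h2 : (2 * max s t) ^ α = 2 ^ α * (max s t) ^ α :=
    Real.mul_rpow (by norm_num) (le_max_of_le_left hs)
  have h3 : (max s t) ^ α ≤ s ^ α + t ^ α := by
    rcases max_cases s t with ⟨h, _⟩ | ⟨h, _⟩ <;> rw [h]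
    · nlinarith [Real.rpow_nonneg ht α]
    · nlinarith [Real.rpow_nonneg hs α]
  calc (s + t) ^ α ≤ 2 ^ α * (max s t) ^ α := by rw [← h2]; exact h1
    _ ≤ 2 ^ α * (s ^ α + t ^ α) := by
        have : (0:ℝ) ≤ 2 ^ α := Real.rpow_nonneg (by norm_num) α
        nlinarith

lemma AG_young {c α ε : ℝ} (hc : 0 ≤ c) (hα1 : 1 ≤ α) (hα2 : α < 2) (hε : 0 < ε) :
    ∃ M : ℝ, ∀ t : ℝ, 0 ≤ t → c * t ^ α ≤ ε * t ^ 2 + M := by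
  have h2α : (0:ℝ) < 2 - α := by linarith
  set T : ℝ := max 1 ((c / ε) ^ (2 - α)⁻¹) with hT
  have hT1 : (1:ℝ) ≤ T := le_max_left _ _
  have hT0 : 0 ≤ T := by linarith
  refine ⟨c * T ^ α, fun t ht => ?_⟩
  rcases le_or_gt t T with h | h
  · have : t ^ α ≤ T ^ α := Real.rpow_le_rpow ht h (by linarith)
    nlinarith [sq_nonneg t, mul_le_mul_of_nonneg_left this hc]
  · have ht1 : (1:ℝ) < t := lt_of_le_of_lt hT1 h
    have hkey : c ≤ ε * t ^ (2 - α) := by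
      have h1 : (c / ε) ^ (2 - α)⁻¹ ≤ T := le_max_right _ _
      calc c = (c / ε) * ε := by field_simp
        _ ≤ t ^ (2 - α) * ε := by
            apply mul_le_mul_of_nonneg_right _ hε.le
            calc c / ε = (c/ε) ^ (1:ℝ) := (Real.rpow_one _).symm
              _ = ((c/ε) ^ (2-α)⁻¹) ^ (2-α) := by
                  rw [← Real.rpow_mul (by positivity), inv_mul_cancel₀ h2α.ne']
              _ ≤ t ^ (2-α) := Real.rpow_le_rpow (Real.rpow_nonneg (by positivity) _)
                  (le_trans h1 h.le) h2α.le
        _ = ε * t ^ (2 - α) := mul_comm _ _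
    have : c * t ^ α ≤ ε * t ^ (2 - α) * t ^ α :=
      mul_le_mul_of_nonneg_right hkey (Real.rpow_nonneg (by linarith) _)
    have ht0 : (0:ℝ) < t := by linarith
    rw [mul_assoc, ← Real.rpow_add ht0] at this
    have h22 : (2 - α) + α = 2 := by ring
    rw [h22] at this
    rw [show t ^ (2:ℝ) = t ^ (2:ℕ) by rw [← Real.rpow_natCast]; norm_num] at this
    nlinarith [mul_nonneg hc (Real.rpow_nonneg hT0 α)]

lemma AG_bddAbove {k : ℕ} (S : Matrix (Fin k) (Fin k) ℝ) :
    BddAbove {r : ℝ | ∃ x : Fin k → ℝ, euclNorm x = 1 ∧ r = euclNorm (S.mulVec x)} := by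
  refine ⟨Real.sqrt (∑ i, ∑ j, (S i j) ^ 2), ?_⟩
  rintro r ⟨x, hx, rfl⟩
  have hx2 : ∑ j, (x j) ^ 2 = 1 := by
    have h0 : 0 ≤ ∑ j, (x j) ^ 2 := Finset.sum_nonneg fun j _ => sq_nonneg _
    have := congrArg (fun t => t ^ 2) hx
    simpa [euclNorm, Real.sq_sqrt h0] using this
  refine Real.sqrt_le_sqrt (Finset.sum_le_sum fun i _ => ?_)
  calc (S.mulVec x i) ^ 2 = (∑ j, S i j * x j) ^ 2 := by rfl
    _ ≤ (∑ j, (S i j) ^ 2) * ∑ j, (x j) ^ 2 := Finset.sum_mul_sq_le_sq_mul_sq _ _ _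
    _ = ∑ j, (S i j) ^ 2 := by rw [hx2, mul_one]

lemma AG_single_norm {k : ℕ} (i : Fin k) : euclNorm (Pi.single i (1:ℝ)) = 1 := by
  have : ∑ j : Fin k, ((Pi.single i (1:ℝ) : Fin k → ℝ) j) ^ 2 = 1 := by
    rw [Finset.sum_eq_single i]
    · simp
    · intro j _ hj; simp [Pi.single_apply, hj]
    · simp
  simp [euclNorm, this]

lemma AG_diag_le_spectral {k : ℕ} (S : Matrix (Fin k) (Fin k) ℝ) (i : Fin k) :
    S i i ≤ matSpectralNorm S := by
  have hmem : euclNorm (S.mulVec (Pi.single i 1)) ∈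
      {r : ℝ | ∃ x : Fin k → ℝ, euclNorm x = 1 ∧ r = euclNorm (S.mulVec x)} :=
    ⟨Pi.single i 1, AG_single_norm i, rfl⟩
  have h1 : S i i ≤ euclNorm (S.mulVec (Pi.single i 1)) := by
    have hc : S.mulVec (Pi.single i 1) = fun j => S j i := by
      funext j
      simp [Matrix.mulVec, dotProduct, Pi.single_apply, Finset.sum_ite_eq]
    rw [hc]
    calc S i i ≤ |S i i| := le_abs_self _
      _ = Real.sqrt ((S i i) ^ 2) := (Real.sqrt_sq_eq_abs _).symm
      _ ≤ euclNorm (fun j => S j i) :=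
          Real.sqrt_le_sqrt (Finset.single_le_sum (fun j _ => sq_nonneg (S j i))
            (Finset.mem_univ i))
  exact h1.trans (le_csSup (AG_bddAbove S) hmem)

lemma AG_diag_nonneg {k : ℕ} {S : Matrix (Fin k) (Fin k) ℝ} (hS : S.PosSemidef) (i : Fin k) :
    0 ≤ S i i := by
  have := hS.dotProduct_mulVec_nonneg (Pi.single i 1)
  simpa [dotProduct, Matrix.mulVec, Pi.single_apply, Finset.sum_ite_eq] using this

lemma AG_spectral_nonneg {k : ℕ} (S : Matrix (Fin k) (Fin k) ℝ) (hS : S.PosSemidef) :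
    0 ≤ matSpectralNorm S := by
  rcases Nat.eq_zero_or_pos k with hk | hk
  · subst hk
    have : {r : ℝ | ∃ x : Fin 0 → ℝ, euclNorm x = 1 ∧ r = euclNorm (S.mulVec x)} = ∅ := by
      ext r
      simp only [Set.mem_setOf_eq, Set.mem_empty_iff_false, iff_false, not_exists]
      intro x ⟨hx, _⟩
      simp [euclNorm] at hx
    rw [matSpectralNorm, this, Real.sSup_empty]
  · have i : Fin k := ⟨0, hk⟩
    exact (AG_diag_nonneg hS i).trans (AG_diag_le_spectral S i)

lemma AG_marginal {k : ℕ} (i : Fin k) {f : ℝ → ENNReal} (hf : Measurable f) :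
    ∫⁻ w, f (w i) ∂(stdGaussian k) = ∫⁻ x, f x ∂(gaussianReal 0 1) := by
  have hmap : (stdGaussian k).map (fun w => w i) = gaussianReal 0 1 := by
    ext s hs
    rw [Measure.map_apply (measurable_pi_apply i) hs]
    have : (fun w : Fin k → ℝ => w i) ⁻¹' s
        = Set.univ.pi (Function.update (fun _ => Set.univ) i s) := by
      rw [Set.univ_pi_update_univ]
    rw [this, _root_.stdGaussian, Measure.pi_pi]
    rw [Finset.prod_eq_single i]
    · simp
    · intro j _ hj; simp [Function.update_of_ne hj]
    · simp
  rw [← hmap, lintegral_map hf (measurable_pi_apply i)]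

lemma AG_gauss_decomp (m : ℝ) (v : NNReal) :
    gaussianReal m v = (gaussianReal 0 1).map (fun w => Real.sqrt v * w + m) := by
  have h1 : (gaussianReal 0 1).map (fun w => Real.sqrt v * w) = gaussianReal 0 v := by
    have hv : (⟨Real.sqrt v ^ 2, sq_nonneg _⟩ : NNReal) * 1 = v := by
      ext; push_cast; rw [mul_one]; exact Real.sq_sqrt v.coe_nonneg
    have h := gaussianReal_map_const_mul (μ := 0) (v := 1) (Real.sqrt v)
    rw [mul_zero] at h
    exact h.trans (congrArg _ hv)
  have h2 : ((gaussianReal 0 1).map (fun w => Real.sqrt v * w)).map (fun x => x + m)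
      = gaussianReal m v := by
    rw [h1]
    simpa using gaussianReal_map_add_const (μ := 0) (v := v) m
  rw [← h2, Measure.map_map (measurable_add_const m) (measurable_const_mul _)]
  rfl

lemma AG_onedim {α : ℝ} (hα0 : 0 ≤ α) {a : ℝ} (ha : 0 ≤ a) (m : ℝ) (v : NNReal) :
    ∫⁻ x, ENNReal.ofReal (Real.exp (a * |x| ^ α)) ∂(gaussianReal m v)
      ≤ ENNReal.ofReal (Real.exp (2 ^ α * a * |m| ^ α)) *
        ∫⁻ w, ENNReal.ofReal (Real.exp ((2 ^ α * a * (v:ℝ) ^ (α/2)) * |w| ^ α))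
          ∂(gaussianReal 0 1) := by
  rw [AG_gauss_decomp m v,
    lintegral_map (by fun_prop) ((measurable_const_mul _).add_const m)]
  have key : ∀ w : ℝ, a * |Real.sqrt v * w + m| ^ α
      ≤ 2 ^ α * a * |m| ^ α + (2 ^ α * a * (v:ℝ) ^ (α/2)) * |w| ^ α := by
    intro w
    have hsv : (0:ℝ) ≤ Real.sqrt v := Real.sqrt_nonneg _
    have habs : |Real.sqrt v * w + m| ≤ Real.sqrt v * |w| + |m| := by
      calc |Real.sqrt v * w + m| ≤ |Real.sqrt v * w| + |m| := abs_add_le _ _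
        _ = Real.sqrt v * |w| + |m| := by rw [abs_mul, abs_of_nonneg hsv]
    have h1 : |Real.sqrt v * w + m| ^ α ≤ (Real.sqrt v * |w| + |m|) ^ α :=
      Real.rpow_le_rpow (abs_nonneg _) habs hα0
    have h2 : (Real.sqrt v * |w| + |m|) ^ α
        ≤ 2 ^ α * ((Real.sqrt v * |w|) ^ α + |m| ^ α) :=
      AG_rpow_add_le hα0 (by positivity) (abs_nonneg _)
    have h3 : (Real.sqrt v * |w|) ^ α = (v:ℝ) ^ (α/2) * |w| ^ α := by
      rw [Real.mul_rpow hsv (abs_nonneg _), Real.sqrt_eq_rpow,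
        ← Real.rpow_mul v.coe_nonneg]
      ring_nf
    have h4 : |Real.sqrt v * w + m| ^ α
        ≤ 2 ^ α * ((v:ℝ) ^ (α/2) * |w| ^ α + |m| ^ α) := by
      rw [← h3]; exact h1.trans h2
    nlinarith [mul_le_mul_of_nonneg_left h4 ha]
  calc ∫⁻ w, ENNReal.ofReal (Real.exp (a * |Real.sqrt v * w + m| ^ α)) ∂(gaussianReal 0 1)
      ≤ ∫⁻ w, ENNReal.ofReal (Real.exp (2 ^ α * a * |m| ^ α)) *
          ENNReal.ofReal (Real.exp ((2 ^ α * a * (v:ℝ) ^ (α/2)) * |w| ^ α))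
          ∂(gaussianReal 0 1) := by
        refine lintegral_mono fun w => ?_
        rw [← ENNReal.ofReal_mul (Real.exp_nonneg _), ← Real.exp_add]
        exact ENNReal.ofReal_le_ofReal (Real.exp_le_exp.mpr (key w))
    _ = ENNReal.ofReal (Real.exp (2 ^ α * a * |m| ^ α)) *
          ∫⁻ w, ENNReal.ofReal (Real.exp ((2 ^ α * a * (v:ℝ) ^ (α/2)) * |w| ^ α))
          ∂(gaussianReal 0 1) :=
      lintegral_const_mul' _ _ ENNReal.ofReal_ne_top

lemma AG_into_mgf {k : ℕ} {α : ℝ} (hα0 : 0 ≤ α) (i : Fin k) {b c : ℝ}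
    (hb : 0 ≤ b) (hbc : b ≤ c) :
    ∫⁻ x, ENNReal.ofReal (Real.exp (b * |x| ^ α)) ∂(gaussianReal 0 1) ≤ gaussMGF k α c := by
  rw [← AG_marginal i (f := fun x => ENNReal.ofReal (Real.exp (b * |x| ^ α))) (by fun_prop)]
  refine lintegral_mono fun w => ?_
  refine ENNReal.ofReal_le_ofReal (Real.exp_le_exp.mpr ?_)
  have h1 : |w i| ^ α ≤ euclNorm w ^ α :=
    Real.rpow_le_rpow (abs_nonneg _) (AG_abs_le_euclNorm w i) hα0
  have h2 : (0:ℝ) ≤ |w i| ^ α := Real.rpow_nonneg (abs_nonneg _) _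
  nlinarith

lemma AG_expsq : ∫⁻ x, ENNReal.ofReal (Real.exp (x ^ 2 / 4)) ∂(gaussianReal 0 1) < ⊤ := by
  rw [gaussianReal_of_var_ne_zero 0 one_ne_zero,
    lintegral_withDensity_eq_lintegral_mul _ (measurable_gaussianPDF 0 1) (by fun_prop)]
  have heq : ∀ x : ℝ, (gaussianPDF 0 1 * fun x => ENNReal.ofReal (Real.exp (x ^ 2 / 4))) x
      = ENNReal.ofReal ((Real.sqrt (2 * Real.pi))⁻¹ * Real.exp (-(4⁻¹) * x ^ 2)) := by
    intro x
    simp only [Pi.mul_apply, gaussianPDF, gaussianPDFReal, NNReal.coe_one, mul_one, sub_zero]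
    rw [← ENNReal.ofReal_mul (by positivity), mul_assoc, ← Real.exp_add]
    rw [show -x ^ 2 / 2 + x ^ 2 / 4 = -(4⁻¹) * x ^ 2 by ring]
  simp_rw [heq]
  exact Integrable.lintegral_lt_top
    ((integrable_exp_neg_mul_sq (by norm_num : (0:ℝ) < 4⁻¹)).const_mul
      ((Real.sqrt (2 * Real.pi))⁻¹))

lemma AG_mgf_finite (k : ℕ) {α : ℝ} (hα1 : 1 ≤ α) (hα2 : α < 2) {c : ℝ} (hc : 0 ≤ c) :
    gaussMGF k α c < ⊤ := by
  rcases Nat.eq_zero_or_pos k with hk | hk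
  · subst hk
    have : ∀ w : Fin 0 → ℝ, ENNReal.ofReal (Real.exp (c * euclNorm w ^ α))
        = ENNReal.ofReal (Real.exp (c * euclNorm (fun i : Fin 0 => (0:ℝ)) ^ α)) := by
      intro w; congr 1
    rw [gaussMGF]
    simp_rw [this]
    rw [lintegral_const]
    exact ENNReal.mul_lt_top ENNReal.ofReal_lt_top (measure_lt_top _ _)
  · obtain ⟨M, hM⟩ := AG_young hc hα1 hα2 (show (0:ℝ) < (4 * (k:ℝ))⁻¹ by positivity)
    have hkne : (k:ℝ) ≠ 0 := Nat.cast_ne_zero.mpr hk.ne'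
    have hpt : ∀ w : Fin k → ℝ, ENNReal.ofReal (Real.exp (c * euclNorm w ^ α))
        ≤ ENNReal.ofReal (Real.exp M) *
          ∏ i, (ENNReal.ofReal (Real.exp ((w i) ^ 2 / 4))) ^ ((k:ℝ)⁻¹) := by
      intro w
      have h1 : c * euclNorm w ^ α ≤ M + ∑ i, (w i) ^ 2 / (4 * (k:ℝ)) := by
        have h0 : 0 ≤ ∑ i, (w i) ^ 2 := Finset.sum_nonneg fun i _ => sq_nonneg _
        have hsq : euclNorm w ^ 2 = ∑ i, (w i) ^ 2 := Real.sq_sqrt h0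
        have := hM (euclNorm w) (Real.sqrt_nonneg _)
        rw [hsq, inv_mul_eq_div] at this
        rw [← Finset.sum_div]
        linarith
      have h2 : ∀ i : Fin k, (ENNReal.ofReal (Real.exp ((w i) ^ 2 / 4))) ^ ((k:ℝ)⁻¹)
          = ENNReal.ofReal (Real.exp ((w i) ^ 2 / (4 * (k:ℝ)))) := by
        intro i
        rw [ENNReal.ofReal_rpow_of_pos (Real.exp_pos _), ← Real.exp_mul]
        congr 2
        field_simp
      calc ENNReal.ofReal (Real.exp (c * euclNorm w ^ α))
          ≤ ENNReal.ofReal (Real.exp (M + ∑ i, (w i) ^ 2 / (4 * (k:ℝ)))) :=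
            ENNReal.ofReal_le_ofReal (Real.exp_le_exp.mpr h1)
        _ = ENNReal.ofReal (Real.exp M)
            * ∏ i, ENNReal.ofReal (Real.exp ((w i) ^ 2 / (4 * (k:ℝ)))) := by
            rw [Real.exp_add, Real.exp_sum, ENNReal.ofReal_mul (Real.exp_nonneg _)]
            congr 1
            rw [← ENNReal.ofReal_prod_of_nonneg]
            intro i _; exact Real.exp_nonneg _
        _ = ENNReal.ofReal (Real.exp M) *
            ∏ i, (ENNReal.ofReal (Real.exp ((w i) ^ 2 / 4))) ^ ((k:ℝ)⁻¹) := by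
            simp_rw [h2]
    calc gaussMGF k α c ≤ ∫⁻ w, ENNReal.ofReal (Real.exp M) *
          ∏ i, (ENNReal.ofReal (Real.exp ((w i) ^ 2 / 4))) ^ ((k:ℝ)⁻¹) ∂(stdGaussian k) :=
          lintegral_mono hpt
      _ = ENNReal.ofReal (Real.exp M) * ∫⁻ w,
          ∏ i, (ENNReal.ofReal (Real.exp ((w i) ^ 2 / 4))) ^ ((k:ℝ)⁻¹) ∂(stdGaussian k) :=
          lintegral_const_mul' _ _ ENNReal.ofReal_ne_top
      _ ≤ ENNReal.ofReal (Real.exp M) * ∏ i : Fin k,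
          (∫⁻ w, ENNReal.ofReal (Real.exp ((w i) ^ 2 / 4)) ∂(stdGaussian k)) ^ ((k:ℝ)⁻¹) := by
          gcongr
          refine ENNReal.lintegral_prod_norm_pow_le _ (fun i _ => ?_) ?_ (fun i _ => by positivity)
          · exact ((Real.measurable_exp.comp (((measurable_pi_apply i).pow_const 2).div_const
              4)).ennreal_ofReal).aemeasurable
          · simp [Finset.card_univ]
            field_simp
      _ < ⊤ := by
          refine ENNReal.mul_lt_top ENNReal.ofReal_lt_top ?_
          refine ENNReal.prod_lt_top fun i _ => ?_
          rw [AG_marginal i (f := fun x => ENNReal.ofReal (Real.exp (x ^ 2 / 4)))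
            ((Real.measurable_exp.comp ((measurable_id.pow_const 2).div_const 4)).ennreal_ofReal)]
          exact ENNReal.rpow_lt_top_of_nonneg (by positivity) AG_expsq.ne

/-- Uniform Gaussian integrability of `α`-controlled functions for `1 ≤ α < 2`: there is a
constant `C > 0` with `E_{z∼N(μ,Σ)}|φ(z)| ≤ C exp(C‖μ‖₂^α) 𝖢_α^k(Cα‖Σ‖₂^{α/2})` for all
`μ` and PSD `Σ`, where `𝖢_α^k` is finite. -/
theorem alpha_controlled_gaussian_integral_bound
    {k : ℕ} (α : ℝ) (hα1 : 1 ≤ α) (hα2 : α < 2)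
    (φ : (Fin k → ℝ) → ℝ) (hφ : AlphaControlled α φ) :
    ∃ C : ℝ, 0 < C ∧
      ∀ (μmean : Fin k → ℝ) (S : Matrix (Fin k) (Fin k) ℝ), S.PosSemidef →
        ∀ ν : Measure (Fin k → ℝ), IsGaussianVec μmean S ν →
          (∫⁻ z, ENNReal.ofReal |φ z| ∂ν
            ≤ ENNReal.ofReal C * ENNReal.ofReal (Real.exp (C * euclNorm μmean ^ α))
              * gaussMGF k α (C * α * matSpectralNorm S ^ (α / 2))) ∧
          gaussMGF k α (C * α * matSpectralNorm S ^ (α / 2)) < ⊤ := by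
  obtain ⟨C₀, c₀, hC₀, hc₀, hb⟩ := hφ
  have h2α : (0:ℝ) < 2 ^ α := Real.rpow_pos_of_pos (by norm_num) α
  have hα0 : (0:ℝ) ≤ α := by linarith
  have hαne : α ≠ 0 := by linarith
  set C : ℝ := max (Real.exp c₀) ((k:ℝ) * C₀ * 2 ^ α) + 1 with hCdef
  have hCe : Real.exp c₀ ≤ C := by
    have := le_max_left (Real.exp c₀) ((k:ℝ) * C₀ * 2 ^ α); linarith
  have hCk : (k:ℝ) * C₀ * 2 ^ α ≤ C := by
    have := le_max_right (Real.exp c₀) ((k:ℝ) * C₀ * 2 ^ α); linarith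
  have hCpos : 0 < C := lt_of_lt_of_le (Real.exp_pos c₀) hCe
  refine ⟨C, hCpos, ?_⟩
  intro μm S hS ν hν
  have hsn : 0 ≤ matSpectralNorm S := AG_spectral_nonneg S hS
  have hcs0 : 0 ≤ C * α * matSpectralNorm S ^ (α / 2) := by positivity
  refine ⟨?_, AG_mgf_finite k hα1 hα2 hcs0⟩
  rcases Nat.eq_zero_or_pos k with hk | hk
  · -- the case `k = 0`
    subst hk
    have h0 := hν 0
    simp only [Finset.univ_eq_empty, Finset.sum_empty] at h0
    have huniv : ν Set.univ = 1 := by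
      have h1 : (Measure.map (fun _ : Fin 0 → ℝ => (0:ℝ)) ν) Set.univ = 1 := by
        rw [h0]; exact measure_univ
      rwa [Measure.map_apply measurable_const MeasurableSet.univ, Set.preimage_univ] at h1
    have hE : euclNorm μm = 0 := by simp [euclNorm]
    have hMGF1 : gaussMGF 0 α (C * α * matSpectralNorm S ^ (α / 2)) = 1 := by
      rw [gaussMGF]
      have hone : ∀ w : Fin 0 → ℝ,
          ENNReal.ofReal (Real.exp ((C * α * matSpectralNorm S ^ (α / 2)) * euclNorm w ^ α))
            = 1 := by
        intro w
        rw [show euclNorm w = 0 by simp [euclNorm], Real.zero_rpow hαne, mul_zero,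
          Real.exp_zero, ENNReal.ofReal_one]
      simp_rw [hone]
      rw [lintegral_one, measure_univ]
    rw [hE, Real.zero_rpow hαne, mul_zero, Real.exp_zero, ENNReal.ofReal_one, hMGF1,
      mul_one, mul_one]
    calc ∫⁻ z, ENNReal.ofReal |φ z| ∂ν
        ≤ ∫⁻ _, ENNReal.ofReal (Real.exp c₀) ∂ν := by
          refine lintegral_mono fun z => ENNReal.ofReal_le_ofReal ((hb z).trans (le_of_eq ?_))
          simp
      _ = ENNReal.ofReal (Real.exp c₀) * ν Set.univ := lintegral_const _
      _ = ENNReal.ofReal (Real.exp c₀) := by rw [huniv, mul_one]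
      _ ≤ ENNReal.ofReal C := ENNReal.ofReal_le_ofReal hCe
  · -- the case `k ≥ 1`
    have hkne : (k:ℝ) ≠ 0 := Nat.cast_ne_zero.mpr hk.ne'
    have hkpos : (0:ℝ) < k := Nat.cast_pos.mpr hk
    set a : ℝ := (k:ℝ) * C₀ with ha_def
    have ha : 0 ≤ a := by positivity
    set G := gaussMGF k α (C * α * matSpectralNorm S ^ (α / 2)) with hGdef
    have hSii : ∀ i : Fin k, 0 ≤ S i i := AG_diag_nonneg hS
    -- Step C: one-dimensional bounds
    have hci : ∀ i : Fin k, ∫⁻ z, ENNReal.ofReal (Real.exp (a * |z i| ^ α)) ∂ν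
        ≤ ENNReal.ofReal (Real.exp (2 ^ α * a * |μm i| ^ α)) * G := by
      intro i
      have hmap := hν (Pi.single i 1)
      have hfun : (fun x : Fin k → ℝ => ∑ j, (Pi.single i (1:ℝ) : Fin k → ℝ) j * x j)
          = fun x => x i := by
        funext x; simp [Pi.single_apply, ite_mul]
      have hmean : ∑ j, (Pi.single i (1:ℝ) : Fin k → ℝ) j * μm j = μm i := by
        simp [Pi.single_apply, ite_mul]
      have hvar : (Pi.single i (1:ℝ) : Fin k → ℝ) ⬝ᵥ S.mulVec (Pi.single i 1) = S i i := by
        simp [dotProduct, Matrix.mulVec, Pi.single_apply, ite_mul, mul_ite]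
      rw [hfun, hmean, hvar] at hmap
      have hint : ∫⁻ z, ENNReal.ofReal (Real.exp (a * |z i| ^ α)) ∂ν
          = ∫⁻ x, ENNReal.ofReal (Real.exp (a * |x| ^ α))
              ∂(gaussianReal (μm i) (Real.toNNReal (S i i))) := by
        rw [← hmap, lintegral_map (by fun_prop) (measurable_pi_apply i)]
      rw [hint]
      refine (AG_onedim hα0 ha (μm i) _).trans (mul_le_mul' le_rfl ?_)
      have hco : ((Real.toNNReal (S i i)) : ℝ) = S i i := Real.coe_toNNReal _ (hSii i)
      rw [hco]
      refine AG_into_mgf hα0 i (mul_nonneg (by positivity) (Real.rpow_nonneg (hSii i) _)) ?_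
      have h1 : (S i i) ^ (α / 2) ≤ matSpectralNorm S ^ (α / 2) :=
        Real.rpow_le_rpow (hSii i) (AG_diag_le_spectral S i) (by positivity)
      have h2 : 2 ^ α * a ≤ C * α := by nlinarith
      calc 2 ^ α * a * (S i i) ^ (α / 2) ≤ 2 ^ α * a * matSpectralNorm S ^ (α / 2) :=
            mul_le_mul_of_nonneg_left h1 (by positivity)
        _ ≤ C * α * matSpectralNorm S ^ (α / 2) :=
            mul_le_mul_of_nonneg_right h2 (Real.rpow_nonneg hsn _)
    -- Step A: pointwise bound
    have hpt : ∀ z : Fin k → ℝ, ENNReal.ofReal |φ z| ≤ ENNReal.ofReal (Real.exp c₀)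
        * ∏ i, (ENNReal.ofReal (Real.exp (a * |z i| ^ α))) ^ ((k:ℝ)⁻¹) := by
      intro z
      have hr : ∀ i : Fin k, (ENNReal.ofReal (Real.exp (a * |z i| ^ α))) ^ ((k:ℝ)⁻¹)
          = ENNReal.ofReal (Real.exp (C₀ * |z i| ^ α)) := by
        intro i
        rw [ENNReal.ofReal_rpow_of_pos (Real.exp_pos _), ← Real.exp_mul]
        congr 2
        field_simp
        ring
      simp_rw [hr]
      have hsplit : Real.exp (C₀ * ∑ i, |z i| ^ α + c₀)
          = Real.exp c₀ * ∏ i, Real.exp (C₀ * |z i| ^ α) := by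
        rw [Real.exp_add, Finset.mul_sum, Real.exp_sum, mul_comm]
      calc ENNReal.ofReal |φ z| ≤ ENNReal.ofReal (Real.exp (C₀ * ∑ i, |z i| ^ α + c₀)) :=
            ENNReal.ofReal_le_ofReal (hb z)
        _ = ENNReal.ofReal (Real.exp c₀) * ∏ i, ENNReal.ofReal (Real.exp (C₀ * |z i| ^ α)) := by
            rw [hsplit, ENNReal.ofReal_mul (Real.exp_nonneg _),
              ENNReal.ofReal_prod_of_nonneg (fun i _ => Real.exp_nonneg _)]
    -- Step B: integrate, Hölder
    calc ∫⁻ z, ENNReal.ofReal |φ z| ∂ν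
        ≤ ∫⁻ z, ENNReal.ofReal (Real.exp c₀)
            * ∏ i, (ENNReal.ofReal (Real.exp (a * |z i| ^ α))) ^ ((k:ℝ)⁻¹) ∂ν :=
          lintegral_mono hpt
      _ = ENNReal.ofReal (Real.exp c₀) * ∫⁻ z,
            ∏ i, (ENNReal.ofReal (Real.exp (a * |z i| ^ α))) ^ ((k:ℝ)⁻¹) ∂ν :=
          lintegral_const_mul' _ _ ENNReal.ofReal_ne_top
      _ ≤ ENNReal.ofReal (Real.exp c₀) * ∏ i : Fin k,
            (∫⁻ z, ENNReal.ofReal (Real.exp (a * |z i| ^ α)) ∂ν) ^ ((k:ℝ)⁻¹) := by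
          refine mul_le_mul' le_rfl
            (ENNReal.lintegral_prod_norm_pow_le _ (fun i _ => ?_) ?_ (fun i _ => by positivity))
          · exact (by fun_prop : Measurable fun z : Fin k → ℝ =>
              ENNReal.ofReal (Real.exp (a * |z i| ^ α))).aemeasurable
          · simp [Finset.card_univ]
            field_simp
      _ ≤ ENNReal.ofReal (Real.exp c₀) * ∏ i : Fin k,
            (ENNReal.ofReal (Real.exp (2 ^ α * a * |μm i| ^ α)) * G) ^ ((k:ℝ)⁻¹) := by
          refine mul_le_mul' le_rfl
            (Finset.prod_le_prod' fun i _ => ENNReal.rpow_le_rpow (hci i) (by positivity))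
      _ = ENNReal.ofReal (Real.exp c₀) *
            ((∏ i : Fin k, (ENNReal.ofReal (Real.exp (2 ^ α * a * |μm i| ^ α))) ^ ((k:ℝ)⁻¹))
              * ∏ _i : Fin k, G ^ ((k:ℝ)⁻¹)) := by
          congr 1
          rw [← Finset.prod_mul_distrib]
          refine Finset.prod_congr rfl fun i _ => ?_
          rw [ENNReal.mul_rpow_of_nonneg _ _ (by positivity)]
      _ = ENNReal.ofReal (Real.exp c₀) *
            (ENNReal.ofReal (Real.exp (2 ^ α * C₀ * ∑ i, |μm i| ^ α)) * G) := by
          congr 1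
          congr 1
          · have hr2 : ∀ i : Fin k,
                (ENNReal.ofReal (Real.exp (2 ^ α * a * |μm i| ^ α))) ^ ((k:ℝ)⁻¹)
                  = ENNReal.ofReal (Real.exp (2 ^ α * C₀ * |μm i| ^ α)) := by
              intro i
              rw [ENNReal.ofReal_rpow_of_pos (Real.exp_pos _), ← Real.exp_mul]
              congr 2
              field_simp
              ring
            simp_rw [hr2]
            rw [← ENNReal.ofReal_prod_of_nonneg (fun i _ => Real.exp_nonneg _), ← Real.exp_sum,
              ← Finset.mul_sum]
          · rw [Finset.prod_const, Finset.card_univ, Fintype.card_fin,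
              ← ENNReal.rpow_natCast (G ^ ((k:ℝ)⁻¹)) k, ← ENNReal.rpow_mul,
              inv_mul_cancel₀ hkne, ENNReal.rpow_one]
      _ ≤ ENNReal.ofReal C * ENNReal.ofReal (Real.exp (C * euclNorm μm ^ α)) * G := by
          rw [← mul_assoc]
          refine mul_le_mul' (mul_le_mul' (ENNReal.ofReal_le_ofReal hCe)
            (ENNReal.ofReal_le_ofReal (Real.exp_le_exp.mpr ?_))) le_rfl
          have h1 : ∑ i, |μm i| ^ α ≤ (k:ℝ) * euclNorm μm ^ α := by
            have hterm : ∀ i ∈ Finset.univ, |μm i| ^ α ≤ euclNorm μm ^ α := fun i _ =>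
              Real.rpow_le_rpow (abs_nonneg _) (AG_abs_le_euclNorm μm i) hα0
            calc ∑ i, |μm i| ^ α ≤ ∑ _i : Fin k, euclNorm μm ^ α := Finset.sum_le_sum hterm
              _ = (k:ℝ) * euclNorm μm ^ α := by
                  rw [Finset.sum_const, Finset.card_univ, Fintype.card_fin, nsmul_eq_mul]
          have hE0 : 0 ≤ euclNorm μm ^ α := Real.rpow_nonneg (AG_euclNorm_nonneg μm) α
          calc 2 ^ α * C₀ * ∑ i, |μm i| ^ α ≤ 2 ^ α * C₀ * ((k:ℝ) * euclNorm μm ^ α) :=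
                mul_le_mul_of_nonneg_left h1 (by positivity)
            _ = ((k:ℝ) * C₀ * 2 ^ α) * euclNorm μm ^ α := by ring
            _ ≤ C * euclNorm μm ^ α := mul_le_mul_of_nonneg_right hCk hE0
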